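/- Let R = (r_{n,k})_{n,k=0}^N be lower triangular with unit diagonal, and for S = {s_1 < ... < s_m} ⊆ [n-1] set α_{[0,n]}(S) = Π_{i=1}^{m+1} r_{s_i, s_{i-1}} with s_0 = 0, s_{m+1} = n, and β_{[0,n]}(S) = Σ_{T⊆S} (-1)^{|S\T|} α_{[0,n]}(T). Then the γ-polynomial of the Chow polynomial H_n[R] equals Σ_{S⊆[n-1], S∪{0} stable} β_{[0,n]}(S) t^{|S|}. -/

import Mathlib

open Polynomial

/-- `d`, `H` are the Chow-derangement and Chow polynomials of the lower triangular
matrix `r` with unit diagonal (up to index `N`). -/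
def ChowFamily (N : ℕ) (r : ℕ → ℕ → ℝ) (d H : ℕ → ℝ[X]) : Prop :=
  d 0 = 1 ∧
  (∀ n ≤ N, (d n).natDegree ≤ n) ∧
  (∀ n ≤ N, reflect n (d n) = d n) ∧
  (∀ n ≤ N, H n = ∑ k ∈ Finset.range (n + 1), C (r n k) * d k) ∧
  (∀ n, 1 ≤ n → n ≤ N → reflect n (H n) = X * H n)

/-- For `S = {s₁ < … < s_m} ⊆ [n-1]`, `α_{[0,n]}(S) = Π_{i=1}^{m+1} r_{sᵢ, sᵢ₋₁}`
with `s₀ = 0` and `s_{m+1} = n`. -/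
def alphaFn (r : ℕ → ℕ → ℝ) (n : ℕ) (S : Finset ℕ) : ℝ :=
  (List.zipWith (fun a b => r b a) (0 :: (S.sort (· ≤ ·) ++ [n]))
    (S.sort (· ≤ ·) ++ [n])).prod

/-- `β_{[0,n]}(S) = Σ_{T ⊆ S} (-1)^{|S∖T|} α_{[0,n]}(T)`. -/
def betaFn (r : ℕ → ℕ → ℝ) (n : ℕ) (S : Finset ℕ) : ℝ :=
  ∑ T ∈ S.powerset, (-1 : ℝ) ^ (S.card - T.card) * alphaFn r n T

/-- chain product: chainProd r x [y₁,…,y_t] = r y₁ x * r y₂ y₁ * ⋯ -/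
def chainProd (r : ℕ → ℕ → ℝ) : ℕ → List ℕ → ℝ
  | _, [] => 1
  | x, y :: l => r y x * chainProd r y l

lemma zipWith_eq_chainProd (r : ℕ → ℕ → ℝ) (l : List ℕ) : ∀ x : ℕ,
    (List.zipWith (fun a b => r b a) (x :: l) l).prod = chainProd r x l := by
  induction l with
  | nil => intro x; simp [chainProd]
  | cons y l ih => intro x; simp [chainProd, ih y]

lemma chainProd_append (r : ℕ → ℕ → ℝ) (l₁ : List ℕ) : ∀ x y l₂,
    chainProd r x (l₁ ++ y :: l₂) = chainProd r x (l₁ ++ [y]) * chainProd r y l₂ := by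
  induction l₁ with
  | nil => intro x y l₂; simp [chainProd]
  | cons z l ih =>
      intro x y l₂
      simp only [List.cons_append, chainProd]
      rw [ih z y l₂]
      ring

lemma alphaFn_eq (r : ℕ → ℕ → ℝ) (n : ℕ) (S : Finset ℕ) :
    alphaFn r n S = chainProd r 0 (S.sort (· ≤ ·) ++ [n]) := by
  rw [alphaFn, zipWith_eq_chainProd]

lemma sort_insert_max {S : Finset ℕ} {s : ℕ} (h : ∀ x ∈ S, x < s) :
    (insert s S).sort (· ≤ ·) = S.sort (· ≤ ·) ++ [s] := by
  have hs : s ∉ S := fun hmem => lt_irrefl s (h s hmem)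
  refine (fun h1 h2 h3 => List.Perm.eq_of_pairwise' (r := (· ≤ ·)) h2 h3 h1) ?_ ?_ ?_
  · refine (Finset.sort_perm_toList (insert s S) (· ≤ ·)).trans ?_
    refine (Finset.toList_insert hs).trans ?_
    refine ((S.toList.perm_cons s).mpr (Finset.sort_perm_toList S (· ≤ ·)).symm).trans ?_
    exact (List.perm_append_singleton s _).symm
  · exact Finset.pairwise_sort _ _
  · rw [List.pairwise_append]
    refine ⟨Finset.pairwise_sort _ _, List.pairwise_singleton _ _, ?_⟩
    intro a ha b hb
    rw [List.mem_singleton] at hb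
    subst hb
    exact le_of_lt (h a ((Finset.mem_sort _).mp ha))

lemma alphaFn_empty (r : ℕ → ℕ → ℝ) (n : ℕ) : alphaFn r n ∅ = r n 0 := by
  simp [alphaFn_eq, chainProd]

lemma betaFn_empty (r : ℕ → ℕ → ℝ) (n : ℕ) : betaFn r n ∅ = r n 0 := by
  simp [betaFn, alphaFn_empty]

lemma alphaFn_insert (r : ℕ → ℕ → ℝ) (n : ℕ) {S : Finset ℕ} {s : ℕ}
    (h : ∀ x ∈ S, x < s) :
    alphaFn r n (insert s S) = alphaFn r s S * r n s := by
  rw [alphaFn_eq, alphaFn_eq, sort_insert_max h, List.append_assoc]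
  rw [show ([s] ++ [n] : List ℕ) = s :: [n] from rfl, chainProd_append]
  simp [chainProd]

lemma betaFn_insert (r : ℕ → ℕ → ℝ) (n : ℕ) {S : Finset ℕ} {s : ℕ}
    (h : ∀ x ∈ S, x < s) :
    betaFn r n (insert s S) = r n s * betaFn r s S - betaFn r n S := by
  have hs : s ∉ S := fun hmem => lt_irrefl s (h s hmem)
  rw [betaFn, Finset.powerset_insert, Finset.sum_union]
  · have hcard : (insert s S).card = S.card + 1 := Finset.card_insert_of_notMem hs
    have h1 : ∑ T ∈ S.powerset, (-1:ℝ) ^ ((insert s S).card - T.card) * alphaFn r n T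
        = - betaFn r n S := by
      rw [betaFn, ← Finset.sum_neg_distrib]
      refine Finset.sum_congr rfl fun T hT => ?_
      have hTS : T ⊆ S := Finset.mem_powerset.mp hT
      have hTc : T.card ≤ S.card := Finset.card_le_card hTS
      rw [hcard, show S.card + 1 - T.card = (S.card - T.card) + 1 by omega, pow_succ]
      ring
    have h2 : ∑ T ∈ S.powerset.image (insert s),
        (-1:ℝ) ^ ((insert s S).card - T.card) * alphaFn r n T
        = r n s * betaFn r s S := by
      have hinj : ∀ T₁ ∈ S.powerset, ∀ T₂ ∈ S.powerset,
          insert s T₁ = insert s T₂ → T₁ = T₂ := by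
        intro T₁ h₁ T₂ h₂ heq
        have hs₁ : s ∉ T₁ := fun hc => hs (Finset.mem_powerset.mp h₁ hc)
        have hs₂ : s ∉ T₂ := fun hc => hs (Finset.mem_powerset.mp h₂ hc)
        rw [← Finset.erase_insert hs₁, ← Finset.erase_insert hs₂, heq]
      rw [Finset.sum_image hinj, betaFn, Finset.mul_sum]
      refine Finset.sum_congr rfl fun T hT => ?_
      have hTS : T ⊆ S := Finset.mem_powerset.mp hT
      have hsT : s ∉ T := fun hc => hs (hTS hc)
      have hTc : T.card ≤ S.card := Finset.card_le_card hTS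
      rw [alphaFn_insert r n (fun x hx => h x (hTS hx)),
        Finset.card_insert_of_notMem hsT, hcard,
        show S.card + 1 - (T.card + 1) = S.card - T.card by omega]
      ring
    rw [h1, h2]; ring
  · rw [Finset.disjoint_left]
    intro T hT hT'
    have hTS : T ⊆ S := Finset.mem_powerset.mp hT
    obtain ⟨T', _, rfl⟩ := Finset.mem_image.mp hT'
    exact hs (hTS (Finset.mem_insert_self s T'))

def stabSets (m : ℕ) : Finset (Finset ℕ) :=
  (Finset.Icc 2 m).powerset.filter (fun S => ∀ i ∈ S, i + 1 ∉ S)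

noncomputable def Epoly (r : ℕ → ℕ → ℝ) (n m : ℕ) : ℝ[X] :=
  ∑ S ∈ stabSets m, C (betaFn r n S) * (X ^ S.card * (1 + X) ^ (m - 2 * S.card))

lemma mem_stabSets {m : ℕ} {S : Finset ℕ} :
    S ∈ stabSets m ↔ S ⊆ Finset.Icc 2 m ∧ ∀ i ∈ S, i + 1 ∉ S := by
  simp [stabSets, Finset.mem_filter, Finset.mem_powerset]

lemma stabSets_card {m : ℕ} {S : Finset ℕ} (hS : S ∈ stabSets m) :
    2 * S.card ≤ m := by
  obtain ⟨hsub, hstab⟩ := mem_stabSets.mp hS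
  have hdisj : Disjoint S (S.image (· + 1)) := by
    rw [Finset.disjoint_right]
    intro x hx hxS
    obtain ⟨y, hy, rfl⟩ := Finset.mem_image.mp hx
    exact hstab y hy hxS
  have hsub2 : S ∪ S.image (· + 1) ⊆ Finset.Icc 2 (m + 1) := by
    intro x hx
    rcases Finset.mem_union.mp hx with hx | hx
    · have := hsub hx; rw [Finset.mem_Icc] at this ⊢; omega
    · obtain ⟨y, hy, rfl⟩ := Finset.mem_image.mp hx
      have := hsub hy; rw [Finset.mem_Icc] at this ⊢; omega
  have hcard := Finset.card_le_card hsub2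
  rw [Finset.card_union_of_disjoint hdisj,
    Finset.card_image_of_injective _ (add_left_injective 1), Nat.card_Icc] at hcard
  omega

lemma Epoly_zero (r : ℕ → ℕ → ℝ) (n : ℕ) : Epoly r n 0 = C (r n 0) := by
  have : stabSets 0 = {∅} := by
    apply Finset.ext
    intro S
    simp only [mem_stabSets, Finset.mem_singleton]
    constructor
    · rintro ⟨hsub, -⟩
      refine Finset.subset_empty.mp ?_
      intro x hx
      have := hsub hx; rw [Finset.mem_Icc] at this; omega
    · rintro rfl; simp
  simp [Epoly, this, betaFn_empty]

lemma Epoly_one (r : ℕ → ℕ → ℝ) (n : ℕ) : Epoly r n 1 = C (r n 0) * (1 + X) := by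
  have : stabSets 1 = {∅} := by
    apply Finset.ext
    intro S
    simp only [mem_stabSets, Finset.mem_singleton]
    constructor
    · rintro ⟨hsub, -⟩
      refine Finset.subset_empty.mp ?_
      intro x hx
      have := hsub hx; rw [Finset.mem_Icc] at this; omega
    · rintro rfl; simp
  simp [Epoly, this, betaFn_empty]

/-- The splitting recursion for `Epoly` (recursion (R)). -/
lemma Epoly_rec (r : ℕ → ℕ → ℝ) (n w : ℕ) :
    Epoly r n (w + 2) = (1 + X) * Epoly r n (w + 1)
      + C (r n (w + 2)) * (X * Epoly r (w + 2) w) - X * Epoly r n w := by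
  classical
  have hsplit : stabSets (w + 2)
      = stabSets (w + 1) ∪ (stabSets w).image (insert (w + 2)) := by
    apply Finset.ext
    intro S
    simp only [Finset.mem_union, Finset.mem_image]
    constructor
    · intro hS
      obtain ⟨hsub, hstab⟩ := mem_stabSets.mp hS
      by_cases hw : w + 2 ∈ S
      · right
        refine ⟨S.erase (w + 2), ?_, Finset.insert_erase hw⟩
        rw [mem_stabSets]
        constructor
        · intro x hx
          have hxS := Finset.mem_of_mem_erase hx
          have hne : x ≠ w + 2 := Finset.ne_of_mem_erase hx
          have hne2 : x ≠ w + 1 := by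
            rintro rfl
            exact hstab _ hxS hw
          have := hsub hxS; rw [Finset.mem_Icc] at this ⊢; omega
        · intro i hi
          exact fun hc => hstab i (Finset.mem_of_mem_erase hi) (Finset.mem_of_mem_erase hc)
      · left
        rw [mem_stabSets]
        refine ⟨fun x hx => ?_, hstab⟩
        have hne : x ≠ w + 2 := fun h => hw (h ▸ hx)
        have := hsub hx; rw [Finset.mem_Icc] at this ⊢; omega
    · rintro (hS | ⟨S', hS', rfl⟩)
      · obtain ⟨hsub, hstab⟩ := mem_stabSets.mp hS
        rw [mem_stabSets]
        refine ⟨fun x hx => ?_, hstab⟩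
        have := hsub hx; rw [Finset.mem_Icc] at this ⊢; omega
      · obtain ⟨hsub, hstab⟩ := mem_stabSets.mp hS'
        rw [mem_stabSets]
        constructor
        · intro x hx
          rcases Finset.mem_insert.mp hx with rfl | hx
          · rw [Finset.mem_Icc]; omega
          · have := hsub hx; rw [Finset.mem_Icc] at this ⊢; omega
        · intro i hi hc
          rcases Finset.mem_insert.mp hi with rfl | hi
          · rcases Finset.mem_insert.mp hc with h | hc
            · omega
            · have := hsub hc; rw [Finset.mem_Icc] at this; omega
          · rcases Finset.mem_insert.mp hc with h | hc
            · have := hsub hi; rw [Finset.mem_Icc] at this; omega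
            · exact hstab i hi hc
  have hnotmem : ∀ S' ∈ stabSets w, w + 2 ∉ S' := by
    intro S' hS' hc
    have := (mem_stabSets.mp hS').1 hc
    rw [Finset.mem_Icc] at this; omega
  have hdisj : Disjoint (stabSets (w + 1)) ((stabSets w).image (insert (w + 2))) := by
    rw [Finset.disjoint_right]
    intro S hS hS1
    obtain ⟨S', hS', rfl⟩ := Finset.mem_image.mp hS
    have := (mem_stabSets.mp hS1).1 (Finset.mem_insert_self (w + 2) S')
    rw [Finset.mem_Icc] at this; omega
  rw [Epoly, hsplit, Finset.sum_union hdisj]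
  have hinj : ∀ T₁ ∈ stabSets w, ∀ T₂ ∈ stabSets w,
      insert (w + 2) T₁ = insert (w + 2) T₂ → T₁ = T₂ := by
    intro T₁ h₁ T₂ h₂ heq
    rw [← Finset.erase_insert (hnotmem _ h₁), ← Finset.erase_insert (hnotmem _ h₂), heq]
  rw [Finset.sum_image hinj]
  have h1 : ∑ S ∈ stabSets (w + 1),
      C (betaFn r n S) * (X ^ S.card * (1 + X) ^ (w + 2 - 2 * S.card))
      = (1 + X) * Epoly r n (w + 1) := by
    rw [Epoly, Finset.mul_sum]
    refine Finset.sum_congr rfl fun S hS => ?_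
    have hc := stabSets_card hS
    rw [show w + 2 - 2 * S.card = (w + 1 - 2 * S.card) + 1 by omega, pow_succ]
    ring
  have h2 : ∑ S ∈ stabSets w, C (betaFn r n (insert (w + 2) S)) *
        (X ^ (insert (w + 2) S).card * (1 + X) ^ (w + 2 - 2 * (insert (w + 2) S).card))
      = C (r n (w + 2)) * (X * Epoly r (w + 2) w) - X * Epoly r n w := by
    rw [Epoly, Epoly, Finset.mul_sum, Finset.mul_sum, Finset.mul_sum, ← Finset.sum_sub_distrib]
    refine Finset.sum_congr rfl fun S hS => ?_
    have hc := stabSets_card hS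
    have hmax : ∀ x ∈ S, x < w + 2 := by
      intro x hx
      have := (mem_stabSets.mp hS).1 hx
      rw [Finset.mem_Icc] at this; omega
    rw [Finset.card_insert_of_notMem (hnotmem _ hS), betaFn_insert r n hmax,
      show w + 2 - 2 * (S.card + 1) = w - 2 * S.card by omega]
    push_cast [C_sub, C_mul]
    ring
  rw [h1, h2]
  ring

noncomputable def qpoly (j : ℕ) : ℝ[X] := ∑ i ∈ Finset.range j, X ^ i

lemma qpoly_zero : qpoly 0 = 0 := by simp [qpoly]

lemma qpoly_one : qpoly 1 = 1 := by simp [qpoly]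

lemma qpoly_succ (j : ℕ) : qpoly (j + 1) = qpoly j + X ^ j := by
  simp [qpoly, Finset.sum_range_succ]

lemma qpoly_step (j : ℕ) : qpoly (j + 2) = (1 + X) * qpoly (j + 1) - X * qpoly j := by
  rw [qpoly_succ (j+1), qpoly_succ j]
  ring

lemma one_sub_X_mul_qpoly (m : ℕ) : (1 - X) * qpoly m = 1 - X ^ m := by
  induction m with
  | zero => simp [qpoly_zero]
  | succ j ih =>
    rw [qpoly_succ, mul_add, ih, pow_succ]
    ring

/-- The key combinatorial identity `C_{n,m}`. -/
lemma Epoly_formula (r : ℕ → ℕ → ℝ) : ∀ m n : ℕ,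
    Epoly r n m = C (r n 0) * qpoly (m + 1)
      + ∑ k ∈ Finset.Icc 2 (m + 1),
          C (r n k) * (X * Epoly r k (k - 2)) * qpoly (m + 1 - k) := by
  intro m
  induction m using Nat.strong_induction_on with
  | _ m ih =>
    match m with
    | 0 =>
      intro n
      rw [Epoly_zero, qpoly_one, show Finset.Icc 2 1 = ∅ by rfl]
      simp
    | 1 =>
      intro n
      rw [Epoly_one, show Finset.Icc 2 2 = {2} by rfl]
      have : qpoly 2 = 1 + X := by
        simp [qpoly, Finset.sum_range_succ]
      simp [this, qpoly_zero]
    | (w + 2) =>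
      intro n
      have hE : Epoly r (w + 2) ((w + 2) - 2) = Epoly r (w + 2) w := by norm_num
      have hsub1 : Finset.Icc 2 (w + 1 + 1) ⊆ Finset.Icc 2 (w + 2 + 1) := by
        intro x hx; rw [Finset.mem_Icc] at hx ⊢; omega
      have hsub2 : Finset.Icc 2 (w + 1) ⊆ Finset.Icc 2 (w + 2 + 1) := by
        intro x hx; rw [Finset.mem_Icc] at hx ⊢; omega
      have e1 : ∑ k ∈ Finset.Icc 2 (w + 2 + 1),
            C (r n k) * (X * Epoly r k (k - 2)) * qpoly (w + 2 + 1 - k)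
          = (1 + X) * ∑ k ∈ Finset.Icc 2 (w + 1 + 1),
              C (r n k) * (X * Epoly r k (k - 2)) * qpoly (w + 1 + 1 - k)
            - X * ∑ k ∈ Finset.Icc 2 (w + 1),
              C (r n k) * (X * Epoly r k (k - 2)) * qpoly (w + 1 - k)
            + C (r n (w + 2)) * (X * Epoly r (w + 2) ((w + 2) - 2)) := by
        rw [Finset.sum_subset hsub1 (by
          intro x hx hnx
          rw [Finset.mem_Icc] at hx
          rw [Finset.mem_Icc] at hnx
          rw [show w + 1 + 1 - x = 0 by omega, qpoly_zero, mul_zero])]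
        rw [Finset.sum_subset hsub2 (by
          intro x hx hnx
          rw [Finset.mem_Icc] at hx
          rw [Finset.mem_Icc] at hnx
          rw [show w + 1 - x = 0 by omega, qpoly_zero, mul_zero])]
        rw [show C (r n (w + 2)) * (X * Epoly r (w + 2) ((w + 2) - 2))
            = ∑ k ∈ Finset.Icc 2 (w + 2 + 1), if k = w + 2 then
                C (r n k) * (X * Epoly r k (k - 2)) else 0 by
          rw [Finset.sum_ite_eq' (Finset.Icc 2 (w + 2 + 1)) (w + 2)
            (fun k => C (r n k) * (X * Epoly r k (k - 2)))]
          rw [if_pos (by rw [Finset.mem_Icc]; omega)]]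
        rw [Finset.mul_sum, Finset.mul_sum, ← Finset.sum_sub_distrib, ← Finset.sum_add_distrib]
        refine Finset.sum_congr rfl fun k hk => ?_
        rw [Finset.mem_Icc] at hk
        rcases Nat.lt_or_ge k (w + 2) with hlt | hge
        · rw [show w + 2 + 1 - k = (w + 1 - k) + 2 by omega,
            show w + 1 + 1 - k = (w + 1 - k) + 1 by omega,
            qpoly_step, if_neg (by omega)]
          ring
        · rcases Nat.eq_or_lt_of_le hge with heq | hlt2
          · subst heq
            rw [show w + 2 + 1 - (w + 2) = 1 by omega, show w + 1 + 1 - (w + 2) = 0 by omega,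
              show w + 1 - (w + 2) = 0 by omega, qpoly_zero, qpoly_one, if_pos rfl]
            ring
          · rw [show w + 2 + 1 - k = 0 by omega, show w + 1 + 1 - k = 0 by omega,
              show w + 1 - k = 0 by omega, qpoly_zero, if_neg (by omega)]
            ring
      rw [Epoly_rec, ih (w + 1) (by omega) n, ih w (by omega) n, e1, hE,
        show w + 2 + 1 = (w + 1) + 2 by omega, qpoly_step (w + 1)]
      ring

lemma natDegree_one_add_X_pow_le (b : ℕ) : ((1 + X : ℝ[X]) ^ b).natDegree ≤ b := by
  refine natDegree_pow_le.trans ?_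
  have : (1 + X : ℝ[X]).natDegree ≤ 1 :=
    (natDegree_add_le _ _).trans (by simp)
  calc b * (1 + X : ℝ[X]).natDegree ≤ b * 1 := Nat.mul_le_mul_left b this
    _ = b := Nat.mul_one b

lemma reflect_one_add_X_pow (b : ℕ) :
    reflect b ((1 + X : ℝ[X]) ^ b) = (1 + X) ^ b := by
  induction b with
  | zero => simp
  | succ b ih =>
    rw [pow_succ, reflect_mul _ _ (natDegree_one_add_X_pow_le b)
      ((natDegree_add_le _ _).trans (by simp)), ih]
    have : reflect 1 (1 + X : ℝ[X]) = 1 + X := by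
      have h01 : (1 + X : ℝ[X]) = X ^ 0 + X ^ 1 := by ring
      rw [h01, reflect_add, reflect_monomial, reflect_monomial, revAt_le (by omega),
        revAt_le (by omega)]
      norm_num [add_comm]
    rw [this, ← pow_succ]

lemma reflect_gamma (a b c : ℕ) :
    reflect (a + b + c) ((X : ℝ[X]) ^ a * (1 + X) ^ b) = X ^ c * (1 + X) ^ b := by
  rw [show a + b + c = a + (b + c) by omega,
    reflect_mul _ _ (le_of_eq (natDegree_X_pow a)) (natDegree_one_add_X_pow_le b |>.trans (by omega)),
    reflect_monomial, revAt_le (le_refl a), Nat.sub_self, pow_zero, one_mul]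
  rw [show (1 + X : ℝ[X]) ^ b = (1 + X) ^ b * 1 by ring,
    reflect_mul _ _ (natDegree_one_add_X_pow_le b) (by simp : (1 : ℝ[X]).natDegree ≤ c),
    reflect_one_add_X_pow, ← pow_zero (X : ℝ[X]), reflect_monomial, revAt_le (by omega), Nat.sub_zero]
  ring

lemma reflect_sum {α : Type*} (s : Finset α) (f : α → ℝ[X]) (N : ℕ) :
    reflect N (∑ i ∈ s, f i) = ∑ i ∈ s, reflect N (f i) := by
  classical
  induction s using Finset.induction with
  | empty => simp [reflect_zero]
  | insert a s h ih => rw [Finset.sum_insert h, Finset.sum_insert h, reflect_add, ih]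

noncomputable def Fdpoly (r : ℕ → ℕ → ℝ) : ℕ → ℝ[X]
  | 0 => 1
  | 1 => 0
  | (k + 2) => X * Epoly r (k + 2) k

noncomputable def Gd (r : ℕ → ℕ → ℝ) (n : ℕ) : ℕ → ℝ[X]
  | 0 => X * qpoly (n - 1)
  | 1 => 0
  | (k + 2) => X ^ 2 * Epoly r (k + 2) k * qpoly (n - 1 - (k + 2))

noncomputable def GH (r : ℕ → ℕ → ℝ) (n : ℕ) : ℕ → ℝ[X]
  | 0 => qpoly n
  | 1 => 0
  | (k + 2) => X * Epoly r (k + 2) k * qpoly (n - (k + 2))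

lemma reflect_Fd (r : ℕ → ℕ → ℝ) {n k : ℕ} (hk : k + 2 < n) :
    reflect n (Fdpoly r (k + 2))
      = ∑ S ∈ stabSets k, C (betaFn r (k + 2) S) *
          (X ^ ((n - k - 1) + S.card) * (1 + X) ^ (k - 2 * S.card)) := by
  rw [Fdpoly, Epoly, Finset.mul_sum, reflect_sum]
  refine Finset.sum_congr rfl fun S hS => ?_
  have hc := stabSets_card hS
  have h1 : (X : ℝ[X]) * (C (betaFn r (k + 2) S) * (X ^ S.card * (1 + X) ^ (k - 2 * S.card)))
      = C (betaFn r (k + 2) S) * (X ^ (S.card + 1) * (1 + X) ^ (k - 2 * S.card)) := by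
    rw [pow_succ]; ring
  rw [h1, reflect_C_mul]
  rw [show n = (S.card + 1) + (k - 2 * S.card) + ((n - k - 1) + S.card) by omega]
  rw [reflect_gamma]
  rw [show S.card + 1 + (k - 2 * S.card) + (n - k - 1 + S.card) = n by omega]

lemma sub_reflect_d (r : ℕ → ℕ → ℝ) {n k : ℕ} (hk : k < n) :
    X * Fdpoly r k - reflect n (Fdpoly r k) = (1 - X) * Gd r n k := by
  match k with
  | 0 =>
    obtain ⟨m, rfl⟩ : ∃ m, n = m + 1 := ⟨n - 1, by omega⟩
    have hrefl : reflect (m + 1) ((X : ℝ[X]) ^ 0) = X ^ (m + 1) := by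
      rw [reflect_monomial, revAt_le (by omega), Nat.sub_zero]
    rw [pow_zero] at hrefl
    rw [Fdpoly, Gd, mul_one, hrefl, show m + 1 - 1 = m by omega]
    linear_combination (-(X : ℝ[X])) * one_sub_X_mul_qpoly m
  | 1 => simp [Fdpoly, Gd, reflect_zero]
  | (k + 2) =>
    obtain ⟨c, rfl⟩ : ∃ c, n = k + 3 + c := ⟨n - k - 3, by omega⟩
    rw [reflect_Fd r hk, Fdpoly, Gd, Epoly,
      show k + 3 + c - 1 - (k + 2) = c by omega,
      show k + 3 + c - k - 1 = c + 2 by omega]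
    have hq := one_sub_X_mul_qpoly c
    simp only [Finset.mul_sum, Finset.sum_mul, ← Finset.sum_sub_distrib]
    refine Finset.sum_congr rfl fun S hS => ?_
    linear_combination (-(X ^ 2) * (C (betaFn r (k + 2) S) *
      (X ^ S.card * (1 + X) ^ (k - 2 * S.card)))) * hq

lemma sub_reflect_H (r : ℕ → ℕ → ℝ) {n k : ℕ} (hk : k < n) :
    Fdpoly r k - reflect n (Fdpoly r k) = (1 - X) * GH r n k := by
  match k with
  | 0 =>
    obtain ⟨m, rfl⟩ : ∃ m, n = m + 1 := ⟨n - 1, by omega⟩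
    have hrefl : reflect (m + 1) ((X : ℝ[X]) ^ 0) = X ^ (m + 1) := by
      rw [reflect_monomial, revAt_le (by omega), Nat.sub_zero]
    rw [pow_zero] at hrefl
    rw [Fdpoly, GH, hrefl]
    linear_combination (-1 : ℝ[X]) * one_sub_X_mul_qpoly (m + 1)
  | 1 => simp [Fdpoly, GH, reflect_zero]
  | (k + 2) =>
    obtain ⟨c, rfl⟩ : ∃ c, n = k + 3 + c := ⟨n - k - 3, by omega⟩
    rw [reflect_Fd r hk, Fdpoly, GH, Epoly,
      show k + 3 + c - (k + 2) = c + 1 by omega,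
      show k + 3 + c - k - 1 = c + 2 by omega]
    have hq := one_sub_X_mul_qpoly (c + 1)
    simp only [Finset.mul_sum, Finset.sum_mul, ← Finset.sum_sub_distrib]
    refine Finset.sum_congr rfl fun S hS => ?_
    linear_combination (-X * (C (betaFn r (k + 2) S) *
      (X ^ S.card * (1 + X) ^ (k - 2 * S.card)))) * hq

lemma sum_split {M : Type*} [AddCommMonoid M] {n : ℕ} (hn : 1 ≤ n) (f : ℕ → M)
    (h1 : f 1 = 0) (hfn : f n = 0) :
    ∑ k ∈ Finset.range n, f k = f 0 + ∑ k ∈ Finset.Icc 2 n, f k := by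
  have hsub : Finset.range n ⊆ Finset.range (n + 1) := by
    intro x hx; rw [Finset.mem_range] at hx ⊢; omega
  rw [Finset.sum_subset hsub (by
    intro x hx hnx
    rw [Finset.mem_range] at hx hnx
    rw [show x = n by omega]
    exact hfn)]
  have hset : Finset.range (n + 1) = insert 0 (insert 1 (Finset.Icc 2 n)) := by
    apply Finset.ext
    intro x
    simp only [Finset.mem_range, Finset.mem_insert, Finset.mem_Icc]
    omega
  rw [hset, Finset.sum_insert (by
      simp only [Finset.mem_insert, Finset.mem_Icc]; omega),
    Finset.sum_insert (by simp only [Finset.mem_Icc]; omega), h1, zero_add]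

lemma Gd_eq (r : ℕ → ℕ → ℝ) (n : ℕ) {k : ℕ} (hk : 2 ≤ k) :
    Gd r n k = X ^ 2 * Epoly r k (k - 2) * qpoly (n - 1 - k) := by
  match k with
  | (k + 2) => rfl

lemma GH_eq (r : ℕ → ℕ → ℝ) (n : ℕ) {k : ℕ} (hk : 2 ≤ k) :
    GH r n k = X * Epoly r k (k - 2) * qpoly (n - k) := by
  match k with
  | (k + 2) => rfl

lemma Fd_eq (r : ℕ → ℕ → ℝ) {k : ℕ} (hk : 2 ≤ k) :
    Fdpoly r k = X * Epoly r k (k - 2) := by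
  match k with
  | (k + 2) => rfl

/-- Main identity, d-version. -/
lemma Md (r : ℕ → ℕ → ℝ) {n : ℕ} (hn : 1 ≤ n) :
    X * (∑ k ∈ Finset.range n, C (r n k) * Fdpoly r k)
      - reflect n (∑ k ∈ Finset.range n, C (r n k) * Fdpoly r k)
      = (1 - X) * Fdpoly r n := by
  rw [reflect_sum, Finset.mul_sum, ← Finset.sum_sub_distrib]
  have step : ∀ k ∈ Finset.range n,
      X * (C (r n k) * Fdpoly r k) - reflect n (C (r n k) * Fdpoly r k)
        = C (r n k) * ((1 - X) * Gd r n k) := by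
    intro k hk
    rw [Finset.mem_range] at hk
    rw [reflect_C_mul, ← sub_reflect_d r hk]
    ring
  rw [Finset.sum_congr rfl step]
  rw [sum_split hn _ (by rw [show Gd r n 1 = 0 from rfl]; ring) (by
    match n, hn with
    | 1, _ => rw [show Gd r 1 1 = 0 from rfl]; ring
    | (m + 2), _ =>
      rw [Gd_eq r _ (by omega), show m + 2 - 1 - (m + 2) = 0 by omega, qpoly_zero]
      ring)]
  match n, hn with
  | 1, _ =>
    rw [show Gd r 1 0 = X * qpoly 0 from rfl, qpoly_zero,
      show Fdpoly r 1 = 0 from rfl, show Finset.Icc 2 1 = ∅ by rfl]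
    simp
  | (m + 2), _ =>
    rw [Fd_eq r (by omega : 2 ≤ m + 2), Epoly_formula r (m + 2 - 2) (m + 2),
      show m + 2 - 2 = m by omega, show Gd r (m + 2) 0 = X * qpoly (m + 2 - 1) from rfl,
      show m + 2 - 1 = m + 1 by omega]
    have hsub : Finset.Icc 2 (m + 1) ⊆ Finset.Icc 2 (m + 2) := by
      intro x hx; rw [Finset.mem_Icc] at hx ⊢; omega
    rw [Finset.sum_subset hsub (by
      intro x hx hnx
      rw [Finset.mem_Icc] at hx hnx
      rw [show m + 1 - x = 0 by omega, qpoly_zero, mul_zero])]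
    rw [mul_add, mul_add]
    congr 1
    · ring
    · rw [Finset.mul_sum, Finset.mul_sum]
      refine Finset.sum_congr rfl fun k hk => ?_
      rw [Finset.mem_Icc] at hk
      rw [Gd_eq r _ (by omega : 2 ≤ k), show m + 2 - 1 - k = m + 1 - k by omega]
      ring

/-- Main identity, H-version. -/
lemma MH (r : ℕ → ℕ → ℝ) {n : ℕ} (hn : 1 ≤ n) :
    (∑ k ∈ Finset.range n, C (r n k) * Fdpoly r k)
      - reflect n (∑ k ∈ Finset.range n, C (r n k) * Fdpoly r k)
      = (1 - X) * Epoly r n (n - 1) := by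
  rw [reflect_sum, ← Finset.sum_sub_distrib]
  have step : ∀ k ∈ Finset.range n,
      C (r n k) * Fdpoly r k - reflect n (C (r n k) * Fdpoly r k)
        = C (r n k) * ((1 - X) * GH r n k) := by
    intro k hk
    rw [Finset.mem_range] at hk
    rw [reflect_C_mul, ← sub_reflect_H r hk]
    ring
  rw [Finset.sum_congr rfl step]
  rw [sum_split hn _ (by rw [show GH r n 1 = 0 from rfl]; ring) (by
    match n, hn with
    | 1, _ => rw [show GH r 1 1 = 0 from rfl]; ring
    | (m + 2), _ =>
      rw [GH_eq r _ (by omega), Nat.sub_self, qpoly_zero]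
      ring)]
  rw [Epoly_formula r (n - 1) n, show n - 1 + 1 = n by omega]
  rw [mul_add]
  congr 1
  · rw [show GH r n 0 = qpoly n from rfl]
    ring
  · rw [Finset.mul_sum]
    refine Finset.sum_congr rfl fun k hk => ?_
    rw [Finset.mem_Icc] at hk
    rw [GH_eq r _ (by omega : 2 ≤ k)]
    ring

lemma one_sub_X_ne_zero : (1 - X : ℝ[X]) ≠ 0 := fun h => by
  have := congrArg (fun p => Polynomial.eval 0 p) h
  simp at this

lemma dFormula (N : ℕ) (r : ℕ → ℕ → ℝ) (hdiag : ∀ n ≤ N, r n n = 1)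
    (d H : ℕ → ℝ[X]) (hdH : ChowFamily N r d H) :
    ∀ n ≤ N, d n = Fdpoly r n := by
  obtain ⟨h0, hdeg, hrefl, hHd, hXH⟩ := hdH
  intro n
  induction n using Nat.strong_induction_on with
  | _ n ih =>
    intro hnN
    match n, hnN with
    | 0, _ => rw [h0]; rfl
    | (n + 1), hnN =>
      have hA : ∑ k ∈ Finset.range (n + 1), C (r (n + 1) k) * d k
          = ∑ k ∈ Finset.range (n + 1), C (r (n + 1) k) * Fdpoly r k := by
        refine Finset.sum_congr rfl fun k hk => ?_
        rw [Finset.mem_range] at hk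
        rw [ih k (by omega) (by omega)]
      have hHn : H (n + 1) = (∑ k ∈ Finset.range (n + 1), C (r (n + 1) k) * d k) + d (n + 1) := by
        rw [hHd (n + 1) hnN, Finset.sum_range_succ, hdiag (n + 1) hnN]
        simp
      have hre := hXH (n + 1) (by omega) hnN
      rw [hHn, reflect_add, hrefl (n + 1) hnN] at hre
      have hkey : (1 - X) * d (n + 1)
          = X * (∑ k ∈ Finset.range (n + 1), C (r (n + 1) k) * d k)
            - reflect (n + 1) (∑ k ∈ Finset.range (n + 1), C (r (n + 1) k) * d k) := by
        linear_combination hre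
      rw [hA] at hkey
      rw [Md r (show 1 ≤ n + 1 by omega)] at hkey
      exact mul_left_cancel₀ one_sub_X_ne_zero hkey

lemma rhs_eq (r : ℕ → ℕ → ℝ) (n : ℕ) :
    ∑ S ∈ (Finset.Icc 1 (n - 1)).powerset.filter
        (fun S => ∀ i ∈ insert 0 S, i + 1 ∉ insert 0 S),
      C (betaFn r n S) * (X ^ S.card * (1 + X) ^ (n - 1 - 2 * S.card))
      = Epoly r n (n - 1) := by
  rw [Epoly]
  refine Finset.sum_congr ?_ fun S _ => rfl
  apply Finset.ext
  intro S
  simp only [Finset.mem_filter, Finset.mem_powerset, mem_stabSets]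
  constructor
  · rintro ⟨hsub, hcond⟩
    constructor
    · intro x hx
      have hx1 := hsub hx
      rw [Finset.mem_Icc] at hx1 ⊢
      have hx2 : x ≠ 1 := by
        rintro rfl
        exact hcond 0 (Finset.mem_insert_self 0 _)
          (Finset.mem_insert_of_mem (by simpa using hx))
      omega
    · intro i hi hc
      exact hcond i (Finset.mem_insert_of_mem hi) (Finset.mem_insert_of_mem hc)
  · rintro ⟨hsub, hstab⟩
    have h2 : ∀ x ∈ S, 2 ≤ x ∧ x ≤ n - 1 := by
      intro x hx
      have := hsub hx; rw [Finset.mem_Icc] at this; omega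
    constructor
    · intro x hx
      rw [Finset.mem_Icc]
      have := h2 x hx; omega
    · intro i hi
      rcases Finset.mem_insert.mp hi with rfl | hi
      · intro hc
        rcases Finset.mem_insert.mp hc with h | hc
        · omega
        · have := h2 _ hc; omega
      · intro hc
        rcases Finset.mem_insert.mp hc with h | hc
        · have := h2 _ hi; omega
        · exact hstab i hi hc


/-- The γ-polynomial of `Hₙ` (in the basis `tᵏ(1+t)^{n-1-2k}`, as `Hₙ` is
palindromic with center `(n-1)/2`) equals
`Σ_{S ⊆ [n-1], S ∪ {0} stable} β_{[0,n]}(S) t^{|S|}`. -/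
theorem stmt12 (N : ℕ) (r : ℕ → ℕ → ℝ)
    (htri : ∀ n k, n < k → r n k = 0) (hdiag : ∀ n ≤ N, r n n = 1)
    (d H : ℕ → ℝ[X]) (hdH : ChowFamily N r d H) :
    ∀ n ≤ N, H n =
      ∑ S ∈ (Finset.Icc 1 (n - 1)).powerset.filter
          (fun S => ∀ i ∈ insert 0 S, i + 1 ∉ insert 0 S),
        C (betaFn r n S) * (X ^ S.card * (1 + X) ^ (n - 1 - 2 * S.card)) := by
  intro n hnN
  have hd := dFormula N r hdiag d H hdH
  rw [rhs_eq r n]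
  obtain ⟨h0, hdeg, hrefl, hHd, hXH⟩ := hdH
  match n, hnN with
  | 0, h0N =>
    have hH0 : H 0 = C (r 0 0) * d 0 := by
      rw [hHd 0 h0N, Finset.sum_range_one]
    rw [hH0, h0, hdiag 0 h0N, show (0 : ℕ) - 1 = 0 by omega, Epoly_zero, hdiag 0 h0N]
    simp
  | (n + 1), hnN =>
    have hA : ∑ k ∈ Finset.range (n + 1), C (r (n + 1) k) * d k
        = ∑ k ∈ Finset.range (n + 1), C (r (n + 1) k) * Fdpoly r k := by
      refine Finset.sum_congr rfl fun k hk => ?_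
      rw [Finset.mem_range] at hk
      rw [hd k (by omega)]
    have hHn : H (n + 1) = (∑ k ∈ Finset.range (n + 1), C (r (n + 1) k) * d k) + d (n + 1) := by
      rw [hHd (n + 1) hnN, Finset.sum_range_succ, hdiag (n + 1) hnN]
      simp
    have hre := hXH (n + 1) (by omega) hnN
    rw [hHn, reflect_add, hrefl (n + 1) hnN] at hre
    rw [← hHn] at hre
    have hkey : (1 - X) * H (n + 1)
        = (∑ k ∈ Finset.range (n + 1), C (r (n + 1) k) * d k)
          - reflect (n + 1) (∑ k ∈ Finset.range (n + 1), C (r (n + 1) k) * d k) := by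
      linear_combination hHn + hre
    rw [hA, MH r (show 1 ≤ n + 1 by omega)] at hkey
    exact mul_left_cancel₀ one_sub_X_ne_zero hkey
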